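/- Let J : ℝ^d → ℝ be twice continuously differentiable with a·I ≼ ∇²J(θ) ≼ b·I for all θ, where 0 < a ≤ b, and let F be a symmetric d×d matrix with a·I ≼ F ≼ b·I. Fix θ ∈ ℝ^d, set g = ∇J(θ), Δθ = F⁻¹g, and λ(θ)² = gᵀ F⁻¹ g. Then for every step size η ≥ 0, J(θ − η·Δθ) ≤ J(θ) − η·λ(θ)² + (b/(2a))·η²·λ(θ)². -/

import Mathlib

open scoped RealInnerProductSpace Matrix

section descent

variable {d : ℕ}

local notation "E" => EuclideanSpace ℝ (Fin d)

lemma grad_inner_eq (J : E → ℝ) (y w : E) :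
    ⟪gradient J y, w⟫ = fderiv ℝ J y w := by
  rw [gradient, InnerProductSpace.toDual_symm_apply]

lemma descent_lemma (J : E → ℝ) (b : ℝ) (hJ : ContDiff ℝ 2 J)
    (hb : ∀ y v : E, ⟪fderiv ℝ (gradient J) y v, v⟫ ≤ b * ‖v‖ ^ 2)
    (x w : E) :
    J (x + w) ≤ J x + ⟪gradient J x, w⟫ + b / 2 * ‖w‖ ^ 2 := by
  have hJ1 : Differentiable ℝ J := hJ.differentiable (by norm_num)
  have hfd : ContDiff ℝ 1 (fderiv ℝ J) := hJ.fderiv_right (by norm_num)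
  have hgradC : ContDiff ℝ 1 (gradient J) := by
    have h : gradient J = fun y => (InnerProductSpace.toDual ℝ E).symm (fderiv ℝ J y) := rfl
    rw [h]
    exact (InnerProductSpace.toDual ℝ E).symm.contDiff.comp hfd
  have hgrad : Differentiable ℝ (gradient J) := hgradC.differentiable one_ne_zero
  set c : ℝ → E := fun t => x + t • w with hc_def
  have hc : ∀ t : ℝ, HasDerivAt c w t := by
    intro t
    simpa [hc_def] using ((hasDerivAt_id t).smul_const w).const_add x
  set f : ℝ → ℝ := fun t => J (c t) with hf_def
  set f' : ℝ → ℝ := fun t => ⟪gradient J (c t), w⟫ with hf'_def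
  have hf : ∀ t : ℝ, HasDerivAt f (f' t) t := by
    intro t
    have h1 := (hJ1 (c t)).hasFDerivAt.comp_hasDerivAt t (hc t)
    have h2 : fderiv ℝ J (c t) w = f' t := (grad_inner_eq J (c t) w).symm
    rw [h2] at h1
    exact h1
  set f'' : ℝ → ℝ := fun t => ⟪fderiv ℝ (gradient J) (c t) w, w⟫ with hf''_def
  have hf' : ∀ t : ℝ, HasDerivAt f' (f'' t) t := by
    intro t
    have hG : HasDerivAt (fun s => gradient J (c s)) (fderiv ℝ (gradient J) (c t) w) t :=
      (hgrad (c t)).hasFDerivAt.comp_hasDerivAt t (hc t)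
    have := HasDerivAt.inner ℝ hG (hasDerivAt_const t w)
    simpa [hf'_def, hf''_def, grad_inner_eq] using this
  have step1 : ∀ t : ℝ, 0 ≤ t → f' t ≤ f' 0 + b * ‖w‖ ^ 2 * t := by
    intro t ht
    set ψ : ℝ → ℝ := fun s => b * ‖w‖ ^ 2 * s - f' s with hψ_def
    have hψ : ∀ s : ℝ, HasDerivAt ψ (b * ‖w‖ ^ 2 - f'' s) s := by
      intro s
      exact (((hasDerivAt_id s).const_mul (b * ‖w‖ ^ 2)).sub (hf' s)).congr_deriv (by simp)
    have hmono : Monotone ψ := by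
      apply monotone_of_deriv_nonneg
      · exact fun s => (hψ s).differentiableAt
      · intro s
        rw [(hψ s).deriv]
        have := hb (c s) w
        linarith
    have := hmono ht
    simp only [hψ_def, mul_zero, zero_sub] at this
    linarith [this]
  set φ : ℝ → ℝ := fun t => J x + t * f' 0 + b / 2 * t ^ 2 * ‖w‖ ^ 2 - f t with hφ_def
  have hφ : ∀ t : ℝ, HasDerivAt φ (f' 0 + b / 2 * (2 * t) * ‖w‖ ^ 2 - f' t) t := by
    intro t
    have ha : HasDerivAt (fun s : ℝ => s * f' 0) (f' 0) t := by
      simpa using (hasDerivAt_id t).mul_const (f' 0)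
    have hb2 : HasDerivAt (fun s : ℝ => b / 2 * s ^ 2 * ‖w‖ ^ 2)
        (b / 2 * (2 * t) * ‖w‖ ^ 2) t := by
      have := ((hasDerivAt_pow 2 t).const_mul (b / 2)).mul_const (‖w‖ ^ 2)
      simpa [mul_comm, mul_assoc, mul_left_comm] using this
    have h1 := ((ha.const_add (J x)).add hb2).sub (hf t)
    exact h1
  have hmono : MonotoneOn φ (Set.Ici (0 : ℝ)) := by
    apply monotoneOn_of_deriv_nonneg (convex_Ici 0)
    · exact (Differentiable.continuous fun t => (hφ t).differentiableAt).continuousOn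
    · intro t ht
      exact (hφ t).differentiableAt.differentiableWithinAt
    · intro t ht
      rw [interior_Ici] at ht
      have ht' : (0:ℝ) ≤ t := le_of_lt ht
      rw [(hφ t).deriv]
      have := step1 t ht'
      nlinarith
  have h01 := hmono Set.self_mem_Ici (Set.mem_Ici.mpr zero_le_one) zero_le_one
  have hc0 : c 0 = x := by simp [hc_def]
  have hc1 : c 1 = x + w := by simp [hc_def]
  have hφ0 : φ 0 = 0 := by simp [hφ_def, hf_def, hc0]
  have hφ1 : φ 1 = J x + f' 0 + b / 2 * ‖w‖ ^ 2 - J (x + w) := by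
    simp [hφ_def, hf_def, hc1]
  have hf'0 : f' 0 = ⟪gradient J x, w⟫ := by simp only [hf'_def]; rw [hc0]
  rw [hφ0, hφ1, hf'0] at h01
  linarith

end descent

/-- Key intermediate inequality: for any step size `η ≥ 0`,
`J(θ − η Δθ) ≤ J(θ) − η λ(θ)² + (b/(2a)) η² λ(θ)²`, where `Δθ = F⁻¹ g` is the
preconditioned direction and `λ(θ)² = gᵀ F⁻¹ g` the Newton decrement. -/
theorem stmt_1 (d : ℕ) (J : EuclideanSpace ℝ (Fin d) → ℝ) (a b : ℝ)
    (ha : 0 < a) (hab : a ≤ b)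
    (hJ : ContDiff ℝ 2 J)
    (hHess : ∀ θ v : EuclideanSpace ℝ (Fin d),
      a * ‖v‖ ^ 2 ≤ ⟪fderiv ℝ (gradient J) θ v, v⟫ ∧
        ⟪fderiv ℝ (gradient J) θ v, v⟫ ≤ b * ‖v‖ ^ 2)
    (F : Matrix (Fin d) (Fin d) ℝ) (hFsymm : F.IsSymm)
    (hFa : (F - a • (1 : Matrix (Fin d) (Fin d) ℝ)).PosSemidef)
    (hFb : ((b • (1 : Matrix (Fin d) (Fin d) ℝ)) - F).PosSemidef)
    (θ g Δθ : EuclideanSpace ℝ (Fin d)) (lamsq : ℝ)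
    (hg : g = gradient J θ)
    (hΔθ : Δθ = Matrix.toEuclideanLin F⁻¹ g)
    (hlamsq : lamsq = ⟪g, Matrix.toEuclideanLin F⁻¹ g⟫) :
    ∀ η : ℝ, 0 ≤ η →
      J (θ - η • Δθ) ≤ J θ - η * lamsq + (b / (2 * a)) * η ^ 2 * lamsq := by
  intro η hη
  have hb0 : 0 < b := lt_of_lt_of_le ha hab
  -- F is positive definite hence invertible
  have haI : (a • (1 : Matrix (Fin d) (Fin d) ℝ)).PosDef := by
    apply Matrix.PosDef.of_dotProduct_mulVec_pos
    · simp [Matrix.IsHermitian]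
    · intro x hx
      have h1 : (a • (1 : Matrix (Fin d) (Fin d) ℝ)) *ᵥ x = a • x := by
        simp [Matrix.smul_mulVec]
      rw [h1]
      have hxx : 0 < dotProduct (star x) x :=
        Matrix.dotProduct_star_self_pos_iff.mpr hx
      have : dotProduct (star x) (a • x) = a * dotProduct (star x) x := by
        simp [dotProduct_smul]
      rw [this]
      positivity
  have hFpd : F.PosDef := by
    have h := Matrix.PosDef.posSemidef_add hFa haI
    simpa using h
  have hdet : IsUnit F.det := (Matrix.isUnit_iff_isUnit_det F).mp hFpd.isUnit
  -- plain-vector versions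
  set gp : Fin d → ℝ := WithLp.equiv 2 (Fin d → ℝ) g with hgp
  set u : Fin d → ℝ := F⁻¹ *ᵥ gp with hu
  have hΔu : WithLp.equiv 2 (Fin d → ℝ) Δθ = u := by
    rw [hΔθ]; rfl
  have hFu : F *ᵥ u = gp := by
    rw [hu, Matrix.mulVec_mulVec, Matrix.mul_nonsing_inv F hdet, Matrix.one_mulVec]
  have hlam : lamsq = dotProduct u (F *ᵥ u) := by
    rw [hlamsq, EuclideanSpace.inner_eq_star_dotProduct]
    rw [show ((Matrix.toEuclideanLin F⁻¹) g).ofLp = u from by rw [← hΔu, hΔθ]; rfl]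
    rw [hFu]
    simp [dotProduct_comm, hgp]
  have hkey : a * dotProduct u u ≤ lamsq := by
    have h0 := hFa.dotProduct_mulVec_nonneg u
    have hstar : star u = u := by simp
    rw [hstar, Matrix.sub_mulVec, dotProduct_sub] at h0
    have h1 : (a • (1 : Matrix (Fin d) (Fin d) ℝ)) *ᵥ u = a • u := by
      simp [Matrix.smul_mulVec]
    rw [h1] at h0
    have h2 : dotProduct u (a • u) = a * dotProduct u u := by
      simp [dotProduct_smul]
    rw [h2] at h0
    rw [hlam]
    linarith
  have hnorm : ‖Δθ‖ ^ 2 = dotProduct u u := by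
    rw [← real_inner_self_eq_norm_sq, EuclideanSpace.inner_eq_star_dotProduct]
    rw [show Δθ.ofLp = u from hΔu]
    simp
  have hnormle : ‖Δθ‖ ^ 2 ≤ lamsq / a := by
    rw [hnorm, le_div_iff₀ ha, mul_comm]
    exact hkey
  have hlam0 : 0 ≤ lamsq := by
    have : 0 ≤ dotProduct u u := by
      have := dotProduct_star_self_nonneg u
      simpa using this
    nlinarith
  -- apply descent lemma
  have hdesc := descent_lemma J b hJ (fun y v => (hHess y v).2) θ (-(η • Δθ))
  have hsub : θ - η • Δθ = θ + -(η • Δθ) := by rw [sub_eq_add_neg]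
  rw [hsub]
  have hinner : ⟪gradient J θ, -(η • Δθ)⟫ = -(η * lamsq) := by
    rw [inner_neg_right, real_inner_smul_right]
    have : ⟪gradient J θ, Δθ⟫ = lamsq := by
      rw [← hg, hΔθ, ← hlamsq]
    rw [this]
  have hwnorm : ‖-(η • Δθ)‖ ^ 2 = η ^ 2 * ‖Δθ‖ ^ 2 := by
    rw [norm_neg, norm_smul, mul_pow, Real.norm_eq_abs, sq_abs]
  rw [hinner, hwnorm] at hdesc
  have hfinal : b / 2 * (η ^ 2 * ‖Δθ‖ ^ 2) ≤ b / (2 * a) * η ^ 2 * lamsq := by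
    have h1 : η ^ 2 * ‖Δθ‖ ^ 2 ≤ η ^ 2 * (lamsq / a) := by
      apply mul_le_mul_of_nonneg_left hnormle (sq_nonneg η)
    have h2 : b / 2 * (η ^ 2 * ‖Δθ‖ ^ 2) ≤ b / 2 * (η ^ 2 * (lamsq / a)) :=
      mul_le_mul_of_nonneg_left h1 (by positivity)
    have h3 : b / 2 * (η ^ 2 * (lamsq / a)) = b / (2 * a) * η ^ 2 * lamsq := by
      field_simp
    linarith
  linarith
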